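/- Let G be a finite simple graph with positive real vertex weights ω, and let u, v be vertices forming a u-v-funnel (i.e., u ∈ N(v) and N(v) \ {u} is a clique in G). If ω(v) ≥ ω(x) for every x ∈ N(v) \ {u}, then there exists a maximum ω-weight independent set of G containing u or containing v. -/

import Mathlib

open scoped Classical

/-- `S` is an independent set of vertices in `G`: no two members are adjacent. -/
def IsIndepSet {V : Type*} (G : SimpleGraph V) (S : Finset V) : Prop :=
  ∀ a ∈ S, ∀ b ∈ S, ¬ G.Adj a b

/-- The maximum total `w`-weight of an independent set of `G` contained in `A`
(the weighted independence number of the subgraph of `G` induced on `A`). -/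
noncomputable def alphaOn {V : Type*} [Fintype V] (G : SimpleGraph V) (w : V → ℝ)
    (A : Set V) : ℝ :=
  sSup {x : ℝ | ∃ S : Finset V, ↑S ⊆ A ∧ IsIndepSet G S ∧ x = ∑ v ∈ S, w v}

/-- The maximum total `w`-weight of an independent set of `G`. -/
noncomputable def alpha {V : Type*} [Fintype V] (G : SimpleGraph V) (w : V → ℝ) : ℝ :=
  alphaOn G w Set.univ

/-- `S` is a maximum `w`-weight independent set of `G`. -/
def IsMWIS {V : Type*} [Fintype V] (G : SimpleGraph V) (w : V → ℝ) (S : Finset V) : Prop :=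
  IsIndepSet G S ∧ ∑ v ∈ S, w v = alpha G w

/-- The closed neighborhood `N[v]` of a vertex. -/
def closedNbhd {V : Type*} (G : SimpleGraph V) (v : V) : Set V :=
  insert v (G.neighborSet v)

/-- The open neighborhood `N(S)` of a set of vertices. -/
def setNbhd {V : Type*} (G : SimpleGraph V) (S : Set V) : Set V :=
  (⋃ s ∈ S, G.neighborSet s) \ S

/-- The closed neighborhood `N[S]` of a set of vertices. -/
def closedSetNbhd {V : Type*} (G : SimpleGraph V) (S : Set V) : Set V :=
  setNbhd G S ∪ S

theorem stmt_10 {V : Type*} [Fintype V] (G : SimpleGraph V) (w : V → ℝ)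
    (hw : ∀ x, 0 < w x) (u v : V)
    (hu : u ∈ G.neighborSet v)
    (hclique : G.IsClique (G.neighborSet v \ {u}))
    (hwt : ∀ x ∈ G.neighborSet v \ {u}, w x ≤ w v) :
    ∃ S : Finset V, IsMWIS G w S ∧ (u ∈ S ∨ v ∈ S) := by
  classical
  have halpha : alpha G w = sSup {x : ℝ | ∃ S : Finset V, ↑S ⊆ (Set.univ : Set V) ∧ IsIndepSet G S ∧ x = ∑ v ∈ S, w v} := rfl
  set A : Set ℝ := {x : ℝ | ∃ S : Finset V, ↑S ⊆ (Set.univ : Set V) ∧ IsIndepSet G S ∧ x = ∑ v ∈ S, w v} with hA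
  have hfin : A.Finite := by
    apply Set.Finite.subset (Finset.finite_toSet
      ((Finset.univ : Finset (Finset V)).image (fun S : Finset V => ∑ x ∈ S, w x)))
    rintro x ⟨S, -, -, rfl⟩
    simp only [Finset.coe_image, Set.mem_image, Finset.mem_coe, Finset.mem_univ]
    exact ⟨S, by simp, rfl⟩
  have hne : A.Nonempty := ⟨0, ∅, by simp [IsIndepSet]⟩
  have hbdd : BddAbove A := hfin.bddAbove
  have hle : ∀ (T : Finset V), IsIndepSet G T → ∑ x ∈ T, w x ≤ alpha G w := by
    intro T hT
    rw [halpha]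
    exact le_csSup hbdd ⟨T, by simp, hT, rfl⟩
  have hmem : alpha G w ∈ A := by rw [halpha]; exact hne.csSup_mem hfin
  obtain ⟨S, -, hSind, hSsum⟩ := hmem
  by_cases hvS : v ∈ S
  · exact ⟨S, ⟨hSind, hSsum.symm⟩, Or.inr hvS⟩
  by_cases huS : u ∈ S
  · exact ⟨S, ⟨hSind, hSsum.symm⟩, Or.inl huS⟩
  by_cases hx : ∃ x ∈ S, G.Adj v x
  · obtain ⟨x, hxS, hvx⟩ := hx
    have hxmem : x ∈ G.neighborSet v \ {u} := ⟨hvx, by rintro rfl; exact huS hxS⟩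
    have hxv : x ≠ v := fun h => hvS (h ▸ hxS)
    have hind : IsIndepSet G (insert v (S.erase x)) := by
      intro a ha b hb hab
      rw [Finset.mem_insert] at ha hb
      rcases ha with hav | ha
      · subst hav
        rcases hb with hbv | hb
        · subst hbv; exact G.loopless.irrefl _ hab
        · have hbS := Finset.mem_of_mem_erase hb
          have hbne : b ≠ x := Finset.ne_of_mem_erase hb
          have hbmem : b ∈ G.neighborSet a \ {u} := ⟨hab, by rintro rfl; exact huS hbS⟩
          exact hSind x hxS b hbS (hclique hxmem hbmem (Ne.symm hbne))
      · rcases hb with hbv | hb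
        · subst hbv
          have haS := Finset.mem_of_mem_erase ha
          have hane : a ≠ x := Finset.ne_of_mem_erase ha
          have hamem : a ∈ G.neighborSet b \ {u} := ⟨hab.symm, by rintro rfl; exact huS haS⟩
          exact hSind x hxS a haS (hclique hxmem hamem (Ne.symm hane))
        · exact hSind a (Finset.mem_of_mem_erase ha) b (Finset.mem_of_mem_erase hb) hab
    have hvnot : v ∉ S.erase x := fun h => hvS (Finset.mem_of_mem_erase h)
    have hsum : ∑ y ∈ insert v (S.erase x), w y = w v + (∑ y ∈ S, w y - w x) := by
      rw [Finset.sum_insert hvnot]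
      congr 1
      rw [eq_sub_iff_add_eq, Finset.sum_erase_add _ _ hxS]
    refine ⟨insert v (S.erase x), ⟨hind, ?_⟩, Or.inr (Finset.mem_insert_self v _)⟩
    have h1 := hle _ hind
    have h2 : alpha G w ≤ ∑ y ∈ insert v (S.erase x), w y := by
      rw [hsum, ← hSsum]
      have := hwt x hxmem
      linarith
    linarith
  · push_neg at hx
    exfalso
    have hind : IsIndepSet G (insert v S) := by
      intro a ha b hb hab
      rw [Finset.mem_insert] at ha hb
      rcases ha with hav | ha
      · subst hav
        rcases hb with hbv | hb
        · subst hbv; exact G.loopless.irrefl _ hab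
        · exact hx b hb hab
      · rcases hb with hbv | hb
        · subst hbv; exact hx a ha hab.symm
        · exact hSind a ha b hb hab
    have h1 := hle _ hind
    rw [Finset.sum_insert hvS, hSsum] at h1
    linarith [hw v]
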